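/- In the rehearsal algorithm random-walk model, for any index i, the number of 'values' among Y_1, ..., Y_i that are not selected by the rehearsal algorithm equals max(H^L_i - H^R_i, 0), where H^L_i = max_{j <= i}(RW(j) - RW(i)) and H^R_i = max_{j >= i}(RW(j) - RW(i)). -/

import Mathlib

lemma sup'_sub_const (s : Finset ℕ) (h : s.Nonempty) (f : ℕ → ℤ) (c : ℤ) :
    s.sup' h (fun z => f z - c) = s.sup' h f - c := by
  apply le_antisymm
  · apply Finset.sup'_le; intro b hb; have := Finset.le_sup' f hb; omega
  · rw [sub_le_iff_le_add]
    apply Finset.sup'_le; intro b hb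
    have := Finset.le_sup' (fun z => f z - c) hb
    omega

/-- suffix maximum of the walk -/
noncomputable def Msup (N : ℕ) (RW : ℕ → ℤ) (j : ℕ) : ℤ :=
  (Finset.Icc (min j N) N).sup' (Finset.nonempty_Icc.mpr (min_le_right _ _)) RW

lemma Msup_eq (N : ℕ) (RW : ℕ → ℤ) (j : ℕ) (hj : j ≤ N) :
    Msup N RW j = (Finset.Icc j N).sup' (Finset.nonempty_Icc.mpr hj) RW := by
  unfold Msup
  congr 1 <;> simp [min_eq_left hj]

lemma RW_le_Msup (N : ℕ) (RW : ℕ → ℤ) (j : ℕ) (hj : j ≤ N) :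
    RW j ≤ Msup N RW j := by
  rw [Msup_eq N RW j hj]
  exact Finset.le_sup' RW (Finset.mem_Icc.mpr ⟨le_refl _, hj⟩)

lemma Msup_succ (N : ℕ) (RW : ℕ → ℤ) (j : ℕ) (hj : j + 1 ≤ N) :
    Msup N RW j = max (RW j) (Msup N RW (j+1)) := by
  rw [Msup_eq N RW j (by omega), Msup_eq N RW (j+1) hj]
  have hins : Finset.Icc j N = insert j (Finset.Icc (j+1) N) := by
    ext a; simp only [Finset.mem_Icc, Finset.mem_insert]; omega
  rw [Finset.sup'_congr _ hins (fun _ _ => rfl)]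
  rw [Finset.sup'_insert (Finset.nonempty_Icc.mpr hj)]

/-- Rehearsal-algorithm walk model.  Items `Y_1 > ... > Y_N` are each a
`value` (`lab t = true`, walk steps down by 1) or a `sample` (`lab t = false`, walk
steps up by a nonnegative amount).  With `HR i = max_{i ≤ z ≤ N} (RW z - RW i)` and
`HL i = max_{0 ≤ z ≤ i} (RW z - RW i)`, and the rehearsal algorithm selecting a value
`Y j` iff `HR j > 0`, the number of values among `Y_1, ..., Y_i` NOT selected equals
`max (HL i - HR i) 0`. -/
theorem stmt9 (N : ℕ) (lab : ℕ → Bool) (RW : ℕ → ℤ)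
    (h0 : RW 0 = 0)
    (hval : ∀ t, 1 ≤ t → t ≤ N → lab t = true → RW t = RW (t-1) - 1)
    (hsam : ∀ t, 1 ≤ t → t ≤ N → lab t = false → RW (t-1) ≤ RW t)
    (HR HL : ℕ → ℤ)
    (hHR : ∀ i (hi : i ≤ N),
      HR i = (Finset.Icc i N).sup' (Finset.nonempty_Icc.mpr hi) (fun z => RW z - RW i))
    (hHL : ∀ i,
      HL i = (Finset.Icc 0 i).sup' (Finset.nonempty_Icc.mpr (Nat.zero_le i)) (fun z => RW z - RW i))
    (i : ℕ) (hi : i ≤ N) :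
    (((Finset.Icc 1 i).filter (fun j => lab j = true ∧ HR j = 0)).card : ℤ) =
      max (HL i - HR i) 0 := by
  -- HR in terms of Msup
  have hHRM : ∀ j, j ≤ N → HR j = Msup N RW j - RW j := by
    intro j hj
    rw [hHR j hj, sup'_sub_const, Msup_eq N RW j hj]
  -- telescoping count
  have key : ∀ k, k ≤ N →
      (((Finset.Icc 1 k).filter (fun j => lab j = true ∧ HR j = 0)).card : ℤ)
        = Msup N RW 0 - Msup N RW k := by
    intro k
    induction k with
    | zero => intro _; simp
    | succ m ih =>
      intro hm
      have hmN : m ≤ N := by omega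
      have ihm := ih hmN
      have hins : Finset.Icc 1 (m+1) = insert (m+1) (Finset.Icc 1 m) := by
        ext a; simp only [Finset.mem_Icc, Finset.mem_insert]; omega
      rw [hins, Finset.filter_insert]
      have hMs : Msup N RW m = max (RW m) (Msup N RW (m+1)) := Msup_succ N RW m hm
      have hle : RW (m+1) ≤ Msup N RW (m+1) := RW_le_Msup N RW (m+1) hm
      have hHR1 : HR (m+1) = Msup N RW (m+1) - RW (m+1) := hHRM (m+1) hm
      by_cases hp : lab (m+1) = true ∧ HR (m+1) = 0
      · rw [if_pos hp]
        have hstep : RW (m+1) = RW m - 1 := by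
          have := hval (m+1) (by omega) hm hp.1
          simpa using this
        have : Msup N RW (m+1) = RW (m+1) := by omega
        rw [Finset.card_insert_of_notMem (by simp [Finset.mem_Icc])]
        push_cast
        rcases max_cases (RW m) (Msup N RW (m+1)) with ⟨h1, h2⟩ | ⟨h1, h2⟩ <;> omega
      · rw [if_neg hp]
        have hMeq : Msup N RW m = Msup N RW (m+1) := by
          cases hl : lab (m+1) with
          | true =>
            have hstep : RW (m+1) = RW m - 1 := by
              have := hval (m+1) (by omega) hm hl
              simpa using this
            have hne : HR (m+1) ≠ 0 := fun h => hp ⟨hl, h⟩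
            rcases max_cases (RW m) (Msup N RW (m+1)) with ⟨h1, h2⟩ | ⟨h1, h2⟩ <;> omega
          | false =>
            have hstep : RW m ≤ RW (m+1) := by
              have := hsam (m+1) (by omega) hm hl
              simpa using this
            rcases max_cases (RW m) (Msup N RW (m+1)) with ⟨h1, h2⟩ | ⟨h1, h2⟩ <;> omega
        omega
  rw [key i hi]
  -- prefix maximum
  set P : ℤ := (Finset.Icc 0 i).sup' (Finset.nonempty_Icc.mpr (Nat.zero_le i)) RW with hP
  have hHLi : HL i = P - RW i := by rw [hHL i, sup'_sub_const]
  have hHRi : HR i = Msup N RW i - RW i := hHRM i hi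
  have hM0 : Msup N RW 0 = max P (Msup N RW i) := by
    rw [Msup_eq N RW 0 (Nat.zero_le N), Msup_eq N RW i hi]
    have hunion : Finset.Icc 0 N = Finset.Icc 0 i ∪ Finset.Icc i N := by
      ext a; simp only [Finset.mem_Icc, Finset.mem_union]; omega
    rw [Finset.sup'_congr _ hunion (fun _ _ => rfl)]
    rw [Finset.sup'_union (Finset.nonempty_Icc.mpr (Nat.zero_le i))
      (Finset.nonempty_Icc.mpr hi) RW]
  rw [hHLi, hHRi, hM0]
  rcases max_cases P (Msup N RW i) with ⟨h1, h2⟩ | ⟨h1, h2⟩ <;>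
    rcases max_cases (P - RW i - (Msup N RW i - RW i)) (0:ℤ) with ⟨h3, h4⟩ | ⟨h3, h4⟩ <;> omega
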